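/- Fix integers K ≥ 1, m ≥ 1, N ≥ 2 and p ≠ q in {1,…,N}. For each k ∈ {0,…,K−1} let W_k > 0 and ε_k > 0, let φ_{j,k} : ℝ^m → ℝ (j = 1,…,N) be twice continuously differentiable and nonnegative, and let c_{p,k} : (ℝ^m)^N → ℝ be twice continuously differentiable. Define u_p : (ℝ^m)^{NK} → ℝ by u_p(x) = Σ_k [ W_k·φ_{p,k}(x_{p,k})/(Σ_{j=1}^N φ_{j,k}(x_{j,k}) + ε_k) − c_{p,k}(x_{p,k}, x_{−p,k}) ]. Then the mixed second-derivative blocks ∂²u_p/∂x_p∂x_q and ∂²u_p/∂x_q∂x_p (each block-diagonal across stages k) are equal if and only if for every k and every x: f_{3,k}·∇φ_{q,k}(x_{q,k})∇φ_{p,k}(x_{p,k})ᵀ − ∂²c_{p,k}/∂x_{p,k}∂x_{q,k} = f_{3,k}·∇φ_{p,k}(x_{p,k})∇φ_{q,k}(x_{q,k})ᵀ − ∂²c_{p,k}/∂x_{q,k}∂x_{p,k}, where Φ_k = Σ_j φ_{j,k}(x_{j,k}) and f_{3,k} = −W_k·(Φ_k + ε_k − 2φ_{p,k}(x_{p,k}))/(Φ_k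 + ε_k)³. -/

import Mathlib

open Matrix

noncomputable section

/-- Second directional derivative of `f` at `x`: first along `v`, then along `w`. -/
def secondDeriv {E : Type*} [NormedAddCommGroup E] [NormedSpace ℝ E]
    (f : E → ℝ) (x v w : E) : ℝ :=
  fderiv ℝ (fun y => fderiv ℝ f y v) x w

/-- The gradient of `f : ℝ^m → ℝ` at `x`, as a vector of partial derivatives. -/
def gradVec {m : ℕ} (f : (Fin m → ℝ) → ℝ) (x : Fin m → ℝ) : Fin m → ℝ :=
  fun a => fderiv ℝ f x (Pi.single a 1)

/-- Basis vector of the joint space `(ℝ^m)^{N×K}` for coordinate `a` of the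
stage-`k` variable of player `j`. -/
def eJ (N K m : ℕ) (j : Fin N) (k : Fin K) (a : Fin m) :
    Fin N → Fin K → Fin m → ℝ :=
  Pi.single j (Pi.single k (Pi.single a 1))

/-- Basis vector of the stage space `(ℝ^m)^N` for coordinate `a` of player `j`'s
stage variable. -/
def eS (N m : ℕ) (j : Fin N) (a : Fin m) : Fin N → Fin m → ℝ :=
  Pi.single j (Pi.single a 1)

section helpers

variable {E F : Type*} [NormedAddCommGroup E] [NormedSpace ℝ E]
  [NormedAddCommGroup F] [NormedSpace ℝ F]

lemma hasDerivAt_line (f : E → F) (hf : Differentiable ℝ f) (x v : E) :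
    HasDerivAt (fun t : ℝ => f (x + t • v)) (fderiv ℝ f x v) 0 := by
  have hl : HasDerivAt (fun t : ℝ => x + t • v) v 0 := by
    simpa using ((hasDerivAt_id (0:ℝ)).smul_const v).const_add x
  have h1 : HasFDerivAt f (fderiv ℝ f x) ((fun t : ℝ => x + t • v) 0) := by
    simpa using (hf x).hasFDerivAt
  exact h1.comp_hasDerivAt (0:ℝ) hl

lemma fderiv_eq_of_line (f : E → ℝ) {x v : E} {d : ℝ}
    (hf : DifferentiableAt ℝ f x)
    (h : HasDerivAt (fun t : ℝ => f (x + t • v)) d 0) : fderiv ℝ f x v = d := by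
  have h' : HasDerivAt (fun t : ℝ => f (x + t • v)) (fderiv ℝ f x v) 0 := by
    have hl : HasDerivAt (fun t : ℝ => x + t • v) v 0 := by
      simpa using ((hasDerivAt_id (0:ℝ)).smul_const v).const_add x
    have h1 : HasFDerivAt f (fderiv ℝ f x) ((fun t : ℝ => x + t • v) 0) := by
      simpa using hf.hasFDerivAt
    exact h1.comp_hasDerivAt (0:ℝ) hl
  exact h'.unique h

lemma diff_fderiv_apply (f : E → ℝ) (hf : ContDiff ℝ 2 f) (v : E) :
    Differentiable ℝ (fun y => fderiv ℝ f y v) := by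
  have h1 : ContDiff ℝ 1 (fderiv ℝ f) := hf.fderiv_right (by norm_num)
  exact (ContinuousLinearMap.apply ℝ ℝ v).differentiable.comp (h1.differentiable one_ne_zero)

end helpers

section stage

variable {N m : ℕ}

def stB (ε : ℝ) (φ : Fin N → (Fin m → ℝ) → ℝ) : (Fin N → Fin m → ℝ) → ℝ :=
  fun y => (∑ j, φ j (y j)) + ε

def stT (W ε : ℝ) (φ : Fin N → (Fin m → ℝ) → ℝ) (p : Fin N) :
    (Fin N → Fin m → ℝ) → ℝ :=
  fun y => W * φ p (y p) / stB ε φ y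

variable (W ε : ℝ) (φ : Fin N → (Fin m → ℝ) → ℝ) (p q : Fin N)

lemma stB_pos (hφ0 : ∀ j x, 0 ≤ φ j x) (hε : 0 < ε) (y : Fin N → Fin m → ℝ) :
    0 < stB ε φ y :=
  add_pos_of_nonneg_of_pos (Finset.sum_nonneg fun j _ => hφ0 j _) hε

lemma stB_ne (hφ0 : ∀ j x, 0 ≤ φ j x) (hε : 0 < ε) (y : Fin N → Fin m → ℝ) :
    stB ε φ y ≠ 0 := (stB_pos ε φ hφ0 hε y).ne'

lemma comp_proj_contDiff (hφ : ∀ j, ContDiff ℝ 2 (φ j)) (j : Fin N) :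
    ContDiff ℝ 2 (fun y : Fin N → Fin m → ℝ => φ j (y j)) :=
  (hφ j).comp (ContinuousLinearMap.proj (R := ℝ) (φ := fun _ : Fin N => Fin m → ℝ) j).contDiff

lemma stB_contDiff (hφ : ∀ j, ContDiff ℝ 2 (φ j)) : ContDiff ℝ 2 (stB ε φ) :=
  (ContDiff.sum fun j _ => comp_proj_contDiff φ hφ j).add contDiff_const

lemma stT_contDiff (hφ : ∀ j, ContDiff ℝ 2 (φ j)) (hφ0 : ∀ j x, 0 ≤ φ j x) (hε : 0 < ε) :
    ContDiff ℝ 2 (stT W ε φ p) :=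
  ContDiff.div (contDiff_const.mul (comp_proj_contDiff φ hφ p)) (stB_contDiff ε φ hφ)
    (stB_ne ε φ hφ0 hε)

lemma sum_fderiv_eS (r : Fin N) (a : Fin m) (y : Fin N → Fin m → ℝ) :
    (∑ j, fderiv ℝ (φ j) (y j) (eS N m r a j)) = fderiv ℝ (φ r) (y r) (Pi.single a 1) := by
  rw [Finset.sum_eq_single r]
  · simp [eS]
  · intro j _ hj
    rw [show eS N m r a j = 0 by simp [eS, Pi.single_eq_of_ne hj]]
    simp
  · simp

lemma fderiv_stT (hφ : ∀ j, ContDiff ℝ 2 (φ j)) (hφ0 : ∀ j x, 0 ≤ φ j x) (hε : 0 < ε)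
    (y v : Fin N → Fin m → ℝ) :
    fderiv ℝ (stT W ε φ p) y v =
      (W * fderiv ℝ (φ p) (y p) (v p) * stB ε φ y
        - W * φ p (y p) * ∑ j, fderiv ℝ (φ j) (y j) (v j)) / (stB ε φ y) ^ 2 := by
  have hnum : HasDerivAt (fun t : ℝ => W * φ p ((y + t • v) p))
      (W * fderiv ℝ (φ p) (y p) (v p)) 0 :=
    (hasDerivAt_line (φ p) ((hφ p).differentiable two_ne_zero) (y p) (v p)).const_mul W
  have hden : HasDerivAt (fun t : ℝ => stB ε φ (y + t • v))
      (∑ j, fderiv ℝ (φ j) (y j) (v j)) 0 := by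
    have h := (HasDerivAt.fun_sum (fun j (_ : j ∈ Finset.univ) =>
      hasDerivAt_line (φ j) ((hφ j).differentiable two_ne_zero) (y j) (v j))).add_const ε
    exact h
  have hne : stB ε φ (y + (0:ℝ) • v) ≠ 0 := by
    simpa using stB_ne ε φ hφ0 hε y
  have h := hnum.div hden hne
  simp only [zero_smul, add_zero] at h
  exact fderiv_eq_of_line _
    ((stT_contDiff W ε φ p hφ hφ0 hε).differentiable two_ne_zero).differentiableAt h

lemma fderiv_stT_q (hφ : ∀ j, ContDiff ℝ 2 (φ j)) (hφ0 : ∀ j x, 0 ≤ φ j x) (hε : 0 < ε)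
    (hq : q ≠ p) (a : Fin m) (y : Fin N → Fin m → ℝ) :
    fderiv ℝ (stT W ε φ p) y (eS N m q a) =
      -(W * φ p (y p)) * fderiv ℝ (φ q) (y q) (Pi.single a 1) / (stB ε φ y) ^ 2 := by
  rw [fderiv_stT W ε φ p hφ hφ0 hε, sum_fderiv_eS φ q a y,
    show eS N m q a p = 0 by simp [eS, Pi.single_eq_of_ne (Ne.symm hq)]]
  simp


lemma fderiv_stT_p (hφ : ∀ j, ContDiff ℝ 2 (φ j)) (hφ0 : ∀ j x, 0 ≤ φ j x) (hε : 0 < ε)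
    (a : Fin m) (y : Fin N → Fin m → ℝ) :
    fderiv ℝ (stT W ε φ p) y (eS N m p a) =
      (W * fderiv ℝ (φ p) (y p) (Pi.single a 1) * stB ε φ y
        - W * φ p (y p) * fderiv ℝ (φ p) (y p) (Pi.single a 1)) / (stB ε φ y) ^ 2 := by
  rw [fderiv_stT W ε φ p hφ hφ0 hε, sum_fderiv_eS φ p a y,
    show eS N m p a p = Pi.single a 1 by simp [eS]]

lemma diff_gradcomp (hφ : ∀ j, ContDiff ℝ 2 (φ j)) (r : Fin N) (a : Fin m) :
    Differentiable ℝ (fun z : Fin N → Fin m → ℝ =>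
      fderiv ℝ (φ r) (z r) (Pi.single a 1)) :=
  (diff_fderiv_apply (φ r) (hφ r) (Pi.single a 1)).comp
    (ContinuousLinearMap.proj (R := ℝ) (φ := fun _ : Fin N => Fin m → ℝ) r).differentiable

lemma diff_G_q (hφ : ∀ j, ContDiff ℝ 2 (φ j)) (hφ0 : ∀ j x, 0 ≤ φ j x) (hε : 0 < ε)
    (a : Fin m) :
    Differentiable ℝ (fun z : Fin N → Fin m → ℝ =>
      -(W * φ p (z p)) * fderiv ℝ (φ q) (z q) (Pi.single a 1) / (stB ε φ z) ^ 2) := by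
  simp only [div_eq_mul_inv]
  refine (((((comp_proj_contDiff φ hφ p).differentiable two_ne_zero).const_mul W).neg.mul
    (diff_gradcomp φ hφ q a)).mul ?_)
  exact (((stB_contDiff ε φ hφ).differentiable two_ne_zero).pow 2).inv
    (fun z => pow_ne_zero 2 (stB_ne ε φ hφ0 hε z))

lemma diff_G_p (hφ : ∀ j, ContDiff ℝ 2 (φ j)) (hφ0 : ∀ j x, 0 ≤ φ j x) (hε : 0 < ε)
    (a : Fin m) :
    Differentiable ℝ (fun z : Fin N → Fin m → ℝ =>
      (W * fderiv ℝ (φ p) (z p) (Pi.single a 1) * stB ε φ z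
        - W * φ p (z p) * fderiv ℝ (φ p) (z p) (Pi.single a 1)) / (stB ε φ z) ^ 2) := by
  simp only [div_eq_mul_inv]
  refine ((((diff_gradcomp φ hφ p a).const_mul W).mul
    ((stB_contDiff ε φ hφ).differentiable two_ne_zero)).sub
    ((((comp_proj_contDiff φ hφ p).differentiable two_ne_zero).const_mul W).mul
      (diff_gradcomp φ hφ p a))).mul ?_
  exact (((stB_contDiff ε φ hφ).differentiable two_ne_zero).pow 2).inv
    (fun z => pow_ne_zero 2 (stB_ne ε φ hφ0 hε z))

lemma secondDeriv_stT_qp (hφ : ∀ j, ContDiff ℝ 2 (φ j)) (hφ0 : ∀ j x, 0 ≤ φ j x) (hε : 0 < ε)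
    (hq : q ≠ p) (a b : Fin m) (y : Fin N → Fin m → ℝ) :
    secondDeriv (stT W ε φ p) y (eS N m q a) (eS N m p b) =
      -W * (stB ε φ y - 2 * φ p (y p)) / stB ε φ y ^ 3 *
        fderiv ℝ (φ q) (y q) (Pi.single a 1) * fderiv ℝ (φ p) (y p) (Pi.single b 1) := by
  have hfun : (fun z => fderiv ℝ (stT W ε φ p) z (eS N m q a)) =
      fun z => -(W * φ p (z p)) * fderiv ℝ (φ q) (z q) (Pi.single a 1) / (stB ε φ z) ^ 2 :=
    funext fun z => fderiv_stT_q W ε φ p q hφ hφ0 hε hq a z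
  rw [secondDeriv, hfun]
  set C := fderiv ℝ (φ q) (y q) (Pi.single a 1) with hC
  set gpb := fderiv ℝ (φ p) (y p) (Pi.single b 1) with hgpb
  have hrw : (fun t : ℝ => -(W * φ p ((y + t • eS N m p b) p)) *
        fderiv ℝ (φ q) ((y + t • eS N m p b) q) (Pi.single a 1) /
        (stB ε φ (y + t • eS N m p b)) ^ 2)
      = fun t : ℝ => -(W * φ p (y p + t • (Pi.single b 1 : Fin m → ℝ))) * C /
          ((∑ j, φ j (y j + t • eS N m p b j)) + ε) ^ 2 := by
    funext t
    simp only [stB, Pi.add_apply, Pi.smul_apply]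
    rw [show eS N m p b p = Pi.single b 1 by simp [eS],
      show eS N m p b q = 0 by simp [eS, Pi.single_eq_of_ne hq]]
    simp
    rfl
  have hnum : HasDerivAt (fun t : ℝ => -(W * φ p (y p + t • (Pi.single b 1 : Fin m → ℝ))) * C)
      (-(W * gpb) * C) 0 :=
    (((hasDerivAt_line (φ p) ((hφ p).differentiable two_ne_zero) (y p)
      ((Pi.single b 1 : Fin m → ℝ))).const_mul W).neg).mul_const C
  have hS : HasDerivAt (fun t : ℝ => (∑ j, φ j (y j + t • eS N m p b j)) + ε) gpb 0 := by
    have h := (HasDerivAt.fun_sum (fun j (_ : j ∈ Finset.univ) =>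
      hasDerivAt_line (φ j) ((hφ j).differentiable two_ne_zero) (y j) (eS N m p b j))).add_const ε
    rwa [sum_fderiv_eS φ p b y] at h
  have hden := hS.pow 2
  have hne : ((∑ j, φ j (y j + (0:ℝ) • eS N m p b j)) + ε) ≠ 0 := by
    simpa [stB] using stB_ne ε φ hφ0 hε y
  have hdiv := hnum.div hden (pow_ne_zero 2 hne)
  simp only [zero_smul, add_zero] at hdiv
  have hBy : ((∑ j, φ j (y j)) + ε) = stB ε φ y := rfl
  rw [hBy] at hdiv
  have h : HasDerivAt (fun t : ℝ =>
      (fun z => -(W * φ p (z p)) * fderiv ℝ (φ q) (z q) (Pi.single a 1) / (stB ε φ z) ^ 2)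
        (y + t • eS N m p b))
      (-W * (stB ε φ y - 2 * φ p (y p)) / stB ε φ y ^ 3 * C * gpb) 0 := by
    rw [show (fun t : ℝ =>
      (fun z => -(W * φ p (z p)) * fderiv ℝ (φ q) (z q) (Pi.single a 1) / (stB ε φ z) ^ 2)
        (y + t • eS N m p b)) = fun t : ℝ => -(W * φ p (y p + t • (Pi.single b 1 : Fin m → ℝ))) * C /
          ((∑ j, φ j (y j + t • eS N m p b j)) + ε) ^ 2 from hrw]
    refine hdiv.congr_deriv ?_
    have hB := stB_ne ε φ hφ0 hε y
    simp only [Pi.pow_apply, zero_smul, add_zero, Nat.cast_ofNat, hBy]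
    field_simp
    ring
  exact fderiv_eq_of_line _ (diff_G_q W ε φ p q hφ hφ0 hε a y) h

lemma secondDeriv_stT_pq (hφ : ∀ j, ContDiff ℝ 2 (φ j)) (hφ0 : ∀ j x, 0 ≤ φ j x) (hε : 0 < ε)
    (hq : q ≠ p) (a b : Fin m) (y : Fin N → Fin m → ℝ) :
    secondDeriv (stT W ε φ p) y (eS N m p a) (eS N m q b) =
      -W * (stB ε φ y - 2 * φ p (y p)) / stB ε φ y ^ 3 *
        fderiv ℝ (φ p) (y p) (Pi.single a 1) * fderiv ℝ (φ q) (y q) (Pi.single b 1) := by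
  have hfun : (fun z => fderiv ℝ (stT W ε φ p) z (eS N m p a)) =
      fun z => (W * fderiv ℝ (φ p) (z p) (Pi.single a 1) * stB ε φ z
        - W * φ p (z p) * fderiv ℝ (φ p) (z p) (Pi.single a 1)) / (stB ε φ z) ^ 2 :=
    funext fun z => fderiv_stT_p W ε φ p hφ hφ0 hε a z
  rw [secondDeriv, hfun]
  set C := fderiv ℝ (φ p) (y p) (Pi.single a 1) with hC
  set gqb := fderiv ℝ (φ q) (y q) (Pi.single b 1) with hgqb
  have hrw : (fun t : ℝ => (W * fderiv ℝ (φ p) ((y + t • eS N m q b) p) (Pi.single a 1) *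
        stB ε φ (y + t • eS N m q b)
        - W * φ p ((y + t • eS N m q b) p) *
          fderiv ℝ (φ p) ((y + t • eS N m q b) p) (Pi.single a 1)) /
        (stB ε φ (y + t • eS N m q b)) ^ 2)
      = fun t : ℝ => (W * C * ((∑ j, φ j (y j + t • eS N m q b j)) + ε)
          - W * φ p (y p) * C) /
          ((∑ j, φ j (y j + t • eS N m q b j)) + ε) ^ 2 := by
    funext t
    simp only [stB, Pi.add_apply, Pi.smul_apply]
    rw [show eS N m q b p = 0 by simp [eS, Pi.single_eq_of_ne (Ne.symm hq)]]
    simp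
    rfl
  have hS : HasDerivAt (fun t : ℝ => (∑ j, φ j (y j + t • eS N m q b j)) + ε) gqb 0 := by
    have h := (HasDerivAt.fun_sum (fun j (_ : j ∈ Finset.univ) =>
      hasDerivAt_line (φ j) ((hφ j).differentiable two_ne_zero) (y j) (eS N m q b j))).add_const ε
    rwa [sum_fderiv_eS φ q b y] at h
  have hnum : HasDerivAt (fun t : ℝ =>
      W * C * ((∑ j, φ j (y j + t • eS N m q b j)) + ε) - W * φ p (y p) * C)
      (W * C * gqb) 0 := ((hS.const_mul (W * C)).sub_const (W * φ p (y p) * C))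
  have hden := hS.pow 2
  have hne : ((∑ j, φ j (y j + (0:ℝ) • eS N m q b j)) + ε) ≠ 0 := by
    simpa [stB] using stB_ne ε φ hφ0 hε y
  have hdiv := hnum.div hden (pow_ne_zero 2 hne)
  simp only [zero_smul, add_zero] at hdiv
  have hBy : ((∑ j, φ j (y j)) + ε) = stB ε φ y := rfl
  rw [hBy] at hdiv
  have h : HasDerivAt (fun t : ℝ =>
      (fun z => (W * fderiv ℝ (φ p) (z p) (Pi.single a 1) * stB ε φ z
        - W * φ p (z p) * fderiv ℝ (φ p) (z p) (Pi.single a 1)) / (stB ε φ z) ^ 2)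
        (y + t • eS N m q b))
      (-W * (stB ε φ y - 2 * φ p (y p)) / stB ε φ y ^ 3 * C * gqb) 0 := by
    rw [show (fun t : ℝ =>
      (fun z => (W * fderiv ℝ (φ p) (z p) (Pi.single a 1) * stB ε φ z
        - W * φ p (z p) * fderiv ℝ (φ p) (z p) (Pi.single a 1)) / (stB ε φ z) ^ 2)
        (y + t • eS N m q b)) = fun t : ℝ =>
          (W * C * ((∑ j, φ j (y j + t • eS N m q b j)) + ε) - W * φ p (y p) * C) /
          ((∑ j, φ j (y j + t • eS N m q b j)) + ε) ^ 2 from hrw]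
    refine hdiv.congr_deriv ?_
    have hB := stB_ne ε φ hφ0 hε y
    simp only [Pi.pow_apply, zero_smul, add_zero, Nat.cast_ofNat, hBy]
    field_simp
    ring
  exact fderiv_eq_of_line _ (diff_G_p W ε φ p hφ hφ0 hε a y) h

lemma diff_fderiv_stT_q (hφ : ∀ j, ContDiff ℝ 2 (φ j)) (hφ0 : ∀ j x, 0 ≤ φ j x) (hε : 0 < ε)
    (hq : q ≠ p) (a : Fin m) :
    Differentiable ℝ (fun z => fderiv ℝ (stT W ε φ p) z (eS N m q a)) := by
  rw [show (fun z => fderiv ℝ (stT W ε φ p) z (eS N m q a)) =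
      fun z => -(W * φ p (z p)) * fderiv ℝ (φ q) (z q) (Pi.single a 1) / (stB ε φ z) ^ 2 from
    funext fun z => fderiv_stT_q W ε φ p q hφ hφ0 hε hq a z]
  exact diff_G_q W ε φ p q hφ hφ0 hε a

lemma diff_fderiv_stT_p (hφ : ∀ j, ContDiff ℝ 2 (φ j)) (hφ0 : ∀ j x, 0 ≤ φ j x) (hε : 0 < ε)
    (a : Fin m) :
    Differentiable ℝ (fun z => fderiv ℝ (stT W ε φ p) z (eS N m p a)) := by
  rw [show (fun z => fderiv ℝ (stT W ε φ p) z (eS N m p a)) =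
      fun z => (W * fderiv ℝ (φ p) (z p) (Pi.single a 1) * stB ε φ z
        - W * φ p (z p) * fderiv ℝ (φ p) (z p) (Pi.single a 1)) / (stB ε φ z) ^ 2 from
    funext fun z => fderiv_stT_p W ε φ p hφ hφ0 hε a z]
  exact diff_G_p W ε φ p hφ hφ0 hε a

end stage

section subc

variable {E : Type*} [NormedAddCommGroup E] [NormedSpace ℝ E]

lemma secondDeriv_sub_c (T c : E → ℝ) (hT : Differentiable ℝ T) (hc : ContDiff ℝ 2 c)
    (v w : E) (hT1 : Differentiable ℝ (fun z => fderiv ℝ T z v)) (y : E) :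
    secondDeriv (fun z => T z - c z) y v w = secondDeriv T y v w - secondDeriv c y v w := by
  have hc1 := diff_fderiv_apply c hc v
  have h1 : (fun z => fderiv ℝ (fun z' => T z' - c z') z v)
      = fun z => fderiv ℝ T z v - fderiv ℝ c z v := by
    funext z
    rw [fderiv_fun_sub (hT z) ((hc.differentiable two_ne_zero) z)]
    rfl
  rw [secondDeriv, secondDeriv, secondDeriv, h1, fderiv_fun_sub (hT1 y) (hc1 y)]
  rfl

end subc

section joint

variable {N K m : ℕ} (W ε : Fin K → ℝ) (φ : Fin N → Fin K → (Fin m → ℝ) → ℝ)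
  (c : Fin K → (Fin N → Fin m → ℝ) → ℝ) (p : Fin N)

def jU : (Fin N → Fin K → Fin m → ℝ) → ℝ := fun x =>
  ∑ k, (W k * φ p k (x p k) / (∑ j, φ j k (x j k) + ε k) - c k (fun j => x j k))

def πk (k : Fin K) : (Fin N → Fin K → Fin m → ℝ) →L[ℝ] (Fin N → Fin m → ℝ) :=
  ContinuousLinearMap.pi fun j : Fin N =>
    (ContinuousLinearMap.proj (R := ℝ) (φ := fun _ : Fin K => Fin m → ℝ) k).comp
      (ContinuousLinearMap.proj (R := ℝ) (φ := fun _ : Fin N => Fin K → Fin m → ℝ) j)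

def jF (k : Fin K) : (Fin N → Fin m → ℝ) → ℝ :=
  fun y => stT (W k) (ε k) (fun j => φ j k) p y - c k y

lemma πk_apply (k : Fin K) (x : Fin N → Fin K → Fin m → ℝ) :
    πk k x = fun j => x j k := rfl

lemma jU_eq : jU W ε φ c p = fun x => ∑ k, jF W ε φ c p k (πk k x) := rfl

lemma jF_contDiff (hφ : ∀ j k, ContDiff ℝ 2 (φ j k)) (hφ0 : ∀ j k x, 0 ≤ φ j k x)
    (hε : ∀ k, 0 < ε k) (hc : ∀ k, ContDiff ℝ 2 (c k)) (k : Fin K) :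
    ContDiff ℝ 2 (jF W ε φ c p k) :=
  (stT_contDiff (W k) (ε k) (fun j => φ j k) p (fun j => hφ j k) (fun j x => hφ0 j k x)
    (hε k)).sub (hc k)

lemma jU_diff (hφ : ∀ j k, ContDiff ℝ 2 (φ j k)) (hφ0 : ∀ j k x, 0 ≤ φ j k x)
    (hε : ∀ k, 0 < ε k) (hc : ∀ k, ContDiff ℝ 2 (c k)) :
    Differentiable ℝ (jU W ε φ c p) := by
  rw [jU_eq]
  exact Differentiable.fun_sum fun k _ =>
    (((jF_contDiff W ε φ c p hφ hφ0 hε hc k).differentiable two_ne_zero).comp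
      (πk k).differentiable)

lemma πk_eJ (k k1 : Fin K) (j : Fin N) (a : Fin m) :
    πk k (eJ N K m j k1 a) = if k = k1 then eS N m j a else 0 := by
  funext j'
  show eJ N K m j k1 a j' k = _
  rcases eq_or_ne j' j with h | h
  · subst h
    simp only [eJ, eS, Pi.single_eq_same]
    rcases eq_or_ne k k1 with h2 | h2
    · subst h2; simp
    · simp [Pi.single_eq_of_ne (Ne.symm h2), h2, Pi.single_eq_same]
  · simp only [eJ, eS, Pi.single_eq_of_ne h]
    rcases eq_or_ne k k1 with h2 | h2 <;> simp [h2, Pi.single_eq_of_ne h]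

lemma fderiv_jU (hφ : ∀ j k, ContDiff ℝ 2 (φ j k)) (hφ0 : ∀ j k x, 0 ≤ φ j k x)
    (hε : ∀ k, 0 < ε k) (hc : ∀ k, ContDiff ℝ 2 (c k))
    (x : Fin N → Fin K → Fin m → ℝ) (j1 : Fin N) (k1 : Fin K) (a : Fin m) :
    fderiv ℝ (jU W ε φ c p) x (eJ N K m j1 k1 a) =
      fderiv ℝ (jF W ε φ c p k1) (πk k1 x) (eS N m j1 a) := by
  apply fderiv_eq_of_line _ ((jU_diff W ε φ c p hφ hφ0 hε hc) x)
  have hline : ∀ k : Fin K,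
      HasDerivAt (fun t : ℝ => jF W ε φ c p k (πk k (x + t • eJ N K m j1 k1 a)))
        (fderiv ℝ (jF W ε φ c p k) (πk k x) (πk k (eJ N K m j1 k1 a))) 0 := by
    intro k
    have h := hasDerivAt_line (jF W ε φ c p k)
      ((jF_contDiff W ε φ c p hφ hφ0 hε hc k).differentiable two_ne_zero)
      (πk k x) (πk k (eJ N K m j1 k1 a))
    have heq : (fun t : ℝ => jF W ε φ c p k (πk k x + t • πk k (eJ N K m j1 k1 a)))
        = fun t : ℝ => jF W ε φ c p k (πk k (x + t • eJ N K m j1 k1 a)) := by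
      funext t
      rw [map_add, ContinuousLinearMap.map_smul]
    rwa [heq] at h
  have hsum := HasDerivAt.fun_sum (fun k (_ : k ∈ Finset.univ) => hline k)
  have hval : (∑ k, fderiv ℝ (jF W ε φ c p k) (πk k x) (πk k (eJ N K m j1 k1 a)))
      = fderiv ℝ (jF W ε φ c p k1) (πk k1 x) (eS N m j1 a) := by
    rw [Finset.sum_eq_single k1]
    · rw [πk_eJ, if_pos rfl]
    · intro k _ hk
      rw [πk_eJ, if_neg hk]
      simp
    · simp
  rw [hval] at hsum
  exact hsum

lemma secondDeriv_jU (hφ : ∀ j k, ContDiff ℝ 2 (φ j k)) (hφ0 : ∀ j k x, 0 ≤ φ j k x)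
    (hε : ∀ k, 0 < ε k) (hc : ∀ k, ContDiff ℝ 2 (c k))
    (x : Fin N → Fin K → Fin m → ℝ) (j1 j2 : Fin N) (k1 k2 : Fin K) (a b : Fin m)
    (hd : Differentiable ℝ (fun y => fderiv ℝ (jF W ε φ c p k1) y (eS N m j1 a))) :
    secondDeriv (jU W ε φ c p) x (eJ N K m j1 k1 a) (eJ N K m j2 k2 b) =
      if k1 = k2 then
        secondDeriv (jF W ε φ c p k1) (πk k1 x) (eS N m j1 a) (eS N m j2 b)
      else 0 := by
  rw [secondDeriv]
  have h1 : (fun x' => fderiv ℝ (jU W ε φ c p) x' (eJ N K m j1 k1 a))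
      = fun x' => fderiv ℝ (jF W ε φ c p k1) (πk k1 x') (eS N m j1 a) :=
    funext fun x' => fderiv_jU W ε φ c p hφ hφ0 hε hc x' j1 k1 a
  rw [h1]
  have hd2 : DifferentiableAt ℝ
      (fun x' => fderiv ℝ (jF W ε φ c p k1) (πk k1 x') (eS N m j1 a)) x :=
    (hd.comp (πk k1).differentiable) x
  have hline := hasDerivAt_line (fun y => fderiv ℝ (jF W ε φ c p k1) y (eS N m j1 a)) hd
    (πk k1 x) (πk k1 (eJ N K m j2 k2 b))
  have heq : (fun t : ℝ => fderiv ℝ (jF W ε φ c p k1)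
        (πk k1 x + t • πk k1 (eJ N K m j2 k2 b)) (eS N m j1 a))
      = fun t : ℝ => fderiv ℝ (jF W ε φ c p k1)
        (πk k1 (x + t • eJ N K m j2 k2 b)) (eS N m j1 a) := by
    funext t
    rw [map_add, ContinuousLinearMap.map_smul]
  rw [heq] at hline
  have hval := fderiv_eq_of_line
    (fun x' => fderiv ℝ (jF W ε φ c p k1) (πk k1 x') (eS N m j1 a)) hd2 hline
  rw [hval, πk_eJ]
  rcases eq_or_ne k1 k2 with h | h
  · rw [if_pos h, if_pos h]
    rfl
  · rw [if_neg h, if_neg h]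
    simp

end joint

section joint2

variable {N K m : ℕ} (W ε : Fin K → ℝ) (φ : Fin N → Fin K → (Fin m → ℝ) → ℝ)
  (c : Fin K → (Fin N → Fin m → ℝ) → ℝ) (p q : Fin N)

lemma diff_fderiv_jF_q (hφ : ∀ j k, ContDiff ℝ 2 (φ j k)) (hφ0 : ∀ j k x, 0 ≤ φ j k x)
    (hε : ∀ k, 0 < ε k) (hc : ∀ k, ContDiff ℝ 2 (c k)) (hq : q ≠ p) (k : Fin K) (a : Fin m) :
    Differentiable ℝ (fun y => fderiv ℝ (jF W ε φ c p k) y (eS N m q a)) := by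
  have hT := stT_contDiff (W k) (ε k) (fun j => φ j k) p (fun j => hφ j k)
    (fun j x => hφ0 j k x) (hε k)
  have h1 : (fun y => fderiv ℝ (jF W ε φ c p k) y (eS N m q a))
      = fun y => fderiv ℝ (stT (W k) (ε k) (fun j => φ j k) p) y (eS N m q a)
          - fderiv ℝ (c k) y (eS N m q a) := by
    funext y
    rw [show jF W ε φ c p k
        = fun y => stT (W k) (ε k) (fun j => φ j k) p y - c k y from rfl,
      fderiv_fun_sub (hT.differentiable two_ne_zero y) ((hc k).differentiable two_ne_zero y)]
    rfl
  rw [h1]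
  exact (diff_fderiv_stT_q (W k) (ε k) (fun j => φ j k) p q (fun j => hφ j k)
    (fun j x => hφ0 j k x) (hε k) hq a).sub (diff_fderiv_apply (c k) (hc k) _)

lemma diff_fderiv_jF_p (hφ : ∀ j k, ContDiff ℝ 2 (φ j k)) (hφ0 : ∀ j k x, 0 ≤ φ j k x)
    (hε : ∀ k, 0 < ε k) (hc : ∀ k, ContDiff ℝ 2 (c k)) (k : Fin K) (a : Fin m) :
    Differentiable ℝ (fun y => fderiv ℝ (jF W ε φ c p k) y (eS N m p a)) := by
  have hT := stT_contDiff (W k) (ε k) (fun j => φ j k) p (fun j => hφ j k)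
    (fun j x => hφ0 j k x) (hε k)
  have h1 : (fun y => fderiv ℝ (jF W ε φ c p k) y (eS N m p a))
      = fun y => fderiv ℝ (stT (W k) (ε k) (fun j => φ j k) p) y (eS N m p a)
          - fderiv ℝ (c k) y (eS N m p a) := by
    funext y
    rw [show jF W ε φ c p k
        = fun y => stT (W k) (ε k) (fun j => φ j k) p y - c k y from rfl,
      fderiv_fun_sub (hT.differentiable two_ne_zero y) ((hc k).differentiable two_ne_zero y)]
    rfl
  rw [h1]
  exact (diff_fderiv_stT_p (W k) (ε k) (fun j => φ j k) p (fun j => hφ j k)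
    (fun j x => hφ0 j k x) (hε k) a).sub (diff_fderiv_apply (c k) (hc k) _)

lemma key_qp (hφ : ∀ j k, ContDiff ℝ 2 (φ j k)) (hφ0 : ∀ j k x, 0 ≤ φ j k x)
    (hε : ∀ k, 0 < ε k) (hc : ∀ k, ContDiff ℝ 2 (c k)) (hq : q ≠ p) (k : Fin K)
    (a b : Fin m) (y : Fin N → Fin m → ℝ) :
    secondDeriv (jF W ε φ c p k) y (eS N m q a) (eS N m p b) =
      -(W k) * (stB (ε k) (fun j => φ j k) y - 2 * φ p k (y p)) /
          stB (ε k) (fun j => φ j k) y ^ 3 *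
        fderiv ℝ (φ q k) (y q) (Pi.single a 1) * fderiv ℝ (φ p k) (y p) (Pi.single b 1) -
      secondDeriv (c k) y (eS N m q a) (eS N m p b) := by
  have hT := stT_contDiff (W k) (ε k) (fun j => φ j k) p (fun j => hφ j k)
    (fun j x => hφ0 j k x) (hε k)
  rw [show jF W ε φ c p k
      = fun y => stT (W k) (ε k) (fun j => φ j k) p y - c k y from rfl,
    secondDeriv_sub_c _ _ (hT.differentiable two_ne_zero) (hc k) _ _
      (diff_fderiv_stT_q (W k) (ε k) (fun j => φ j k) p q (fun j => hφ j k)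
        (fun j x => hφ0 j k x) (hε k) hq a) y,
    secondDeriv_stT_qp (W k) (ε k) (fun j => φ j k) p q (fun j => hφ j k)
      (fun j x => hφ0 j k x) (hε k) hq a b y]

lemma key_pq (hφ : ∀ j k, ContDiff ℝ 2 (φ j k)) (hφ0 : ∀ j k x, 0 ≤ φ j k x)
    (hε : ∀ k, 0 < ε k) (hc : ∀ k, ContDiff ℝ 2 (c k)) (hq : q ≠ p) (k : Fin K)
    (a b : Fin m) (y : Fin N → Fin m → ℝ) :
    secondDeriv (jF W ε φ c p k) y (eS N m p a) (eS N m q b) =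
      -(W k) * (stB (ε k) (fun j => φ j k) y - 2 * φ p k (y p)) /
          stB (ε k) (fun j => φ j k) y ^ 3 *
        fderiv ℝ (φ p k) (y p) (Pi.single a 1) * fderiv ℝ (φ q k) (y q) (Pi.single b 1) -
      secondDeriv (c k) y (eS N m p a) (eS N m q b) := by
  have hT := stT_contDiff (W k) (ε k) (fun j => φ j k) p (fun j => hφ j k)
    (fun j x => hφ0 j k x) (hε k)
  rw [show jF W ε φ c p k
      = fun y => stT (W k) (ε k) (fun j => φ j k) p y - c k y from rfl,
    secondDeriv_sub_c _ _ (hT.differentiable two_ne_zero) (hc k) _ _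
      (diff_fderiv_stT_p (W k) (ε k) (fun j => φ j k) p (fun j => hφ j k)
        (fun j x => hφ0 j k x) (hε k) a) y,
    secondDeriv_stT_pq (W k) (ε k) (fun j => φ j k) p q (fun j => hφ j k)
      (fun j x => hφ0 j k x) (hε k) hq a b y]

end joint2

/-- Lemma 4 (commutativity): for the lossy Tullock profit
`u_p(x) = Σ_k [W_k φ_{p,k}(x_{p,k})/(Σ_j φ_{j,k}(x_{j,k}) + ε_k) − c_{p,k}(x_{·,k})]`,
the mixed second-derivative blocks `∂²u_p/∂x_p∂x_q` and `∂²u_p/∂x_q∂x_p` coincide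
iff the stage-wise condition with `f₃ = −W_k (Φ_k + ε_k − 2φ_{p,k})/(Φ_k + ε_k)³`
holds for every stage `k` and every `x`. -/
theorem stmt8 (K m N : ℕ) (hK : 1 ≤ K) (hm : 1 ≤ m) (hN : 2 ≤ N)
    (p q : Fin N) (hpq : p ≠ q)
    (W ε : Fin K → ℝ) (hW : ∀ k, 0 < W k) (hε : ∀ k, 0 < ε k)
    (φ : Fin N → Fin K → (Fin m → ℝ) → ℝ)
    (hφ : ∀ j k, ContDiff ℝ 2 (φ j k)) (hφ0 : ∀ j k xjk, 0 ≤ φ j k xjk)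
    (c : Fin K → (Fin N → Fin m → ℝ) → ℝ) (hc : ∀ k, ContDiff ℝ 2 (c k)) :
    -- the player `p` total profit
    let u : (Fin N → Fin K → Fin m → ℝ) → ℝ := fun x =>
      ∑ k, (W k * φ p k (x p k) / (∑ j, φ j k (x j k) + ε k) -
        c k (fun j => x j k))
    -- `∂²u_p/∂x_p∂x_q`: rows from `∇_{x_q} u_p`, columns differentiated w.r.t. `x_p`
    ((∀ x : Fin N → Fin K → Fin m → ℝ,
        (Matrix.of fun (ka : Fin K × Fin m) (lb : Fin K × Fin m) =>
          secondDeriv u x (eJ N K m q ka.1 ka.2) (eJ N K m p lb.1 lb.2)) =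
        -- `∂²u_p/∂x_q∂x_p`: rows from `∇_{x_p} u_p`, columns differentiated w.r.t. `x_q`
        (Matrix.of fun (ka : Fin K × Fin m) (lb : Fin K × Fin m) =>
          secondDeriv u x (eJ N K m p ka.1 ka.2) (eJ N K m q lb.1 lb.2)))
      ↔
      (∀ (x : Fin N → Fin K → Fin m → ℝ) (k : Fin K),
        (Matrix.of fun a b =>
          (-(W k) * ((∑ j, φ j k (x j k)) + ε k - 2 * φ p k (x p k)) /
              ((∑ j, φ j k (x j k)) + ε k) ^ 3) *
            gradVec (φ q k) (x q k) a * gradVec (φ p k) (x p k) b -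
          secondDeriv (c k) (fun j => x j k) (eS N m q a) (eS N m p b)) =
        (Matrix.of fun a b =>
          (-(W k) * ((∑ j, φ j k (x j k)) + ε k - 2 * φ p k (x p k)) /
              ((∑ j, φ j k (x j k)) + ε k) ^ 3) *
            gradVec (φ p k) (x p k) a * gradVec (φ q k) (x q k) b -
          secondDeriv (c k) (fun j => x j k) (eS N m p a) (eS N m q b)))) := by
  intro u
  have hu : u = jU W ε φ c p := rfl
  rw [hu]
  have hqp : q ≠ p := Ne.symm hpq
  have hφ0' : ∀ j k x, 0 ≤ φ j k x := fun j k x => hφ0 j k x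
  -- bridging identities (definitional transport of the `key` lemmas)
  have e1 : ∀ (x : Fin N → Fin K → Fin m → ℝ) (k : Fin K) (a b : Fin m),
      (-(W k) * ((∑ j, φ j k (x j k)) + ε k - 2 * φ p k (x p k)) /
          ((∑ j, φ j k (x j k)) + ε k) ^ 3) *
        gradVec (φ q k) (x q k) a * gradVec (φ p k) (x p k) b -
        secondDeriv (c k) (fun j => x j k) (eS N m q a) (eS N m p b) =
      secondDeriv (jF W ε φ c p k) (fun j => x j k) (eS N m q a) (eS N m p b) :=
    fun x k a b => (key_qp W ε φ c p q hφ hφ0' hε hc hqp k a b (fun j => x j k)).symm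
  have e2 : ∀ (x : Fin N → Fin K → Fin m → ℝ) (k : Fin K) (a b : Fin m),
      (-(W k) * ((∑ j, φ j k (x j k)) + ε k - 2 * φ p k (x p k)) /
          ((∑ j, φ j k (x j k)) + ε k) ^ 3) *
        gradVec (φ p k) (x p k) a * gradVec (φ q k) (x q k) b -
        secondDeriv (c k) (fun j => x j k) (eS N m p a) (eS N m q b) =
      secondDeriv (jF W ε φ c p k) (fun j => x j k) (eS N m p a) (eS N m q b) :=
    fun x k a b => (key_pq W ε φ c p q hφ hφ0' hε hc hqp k a b (fun j => x j k)).symm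
  constructor
  · intro h x k
    ext a b
    simp only [Matrix.of_apply]
    rw [e1 x k a b, e2 x k a b]
    have hm' := Matrix.ext_iff.mpr (h x) (k, a) (k, b)
    simp only [Matrix.of_apply] at hm'
    rw [secondDeriv_jU W ε φ c p hφ hφ0' hε hc x q p k k a b
        (diff_fderiv_jF_q W ε φ c p q hφ hφ0' hε hc hqp k a),
      secondDeriv_jU W ε φ c p hφ hφ0' hε hc x p q k k a b
        (diff_fderiv_jF_p W ε φ c p hφ hφ0' hε hc k a),
      if_pos rfl, if_pos rfl] at hm'
    exact hm'
  · intro h x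
    ext ka lb
    obtain ⟨k1, a⟩ := ka
    obtain ⟨k2, b⟩ := lb
    simp only [Matrix.of_apply]
    rw [secondDeriv_jU W ε φ c p hφ hφ0' hε hc x q p k1 k2 a b
        (diff_fderiv_jF_q W ε φ c p q hφ hφ0' hε hc hqp k1 a),
      secondDeriv_jU W ε φ c p hφ hφ0' hε hc x p q k1 k2 a b
        (diff_fderiv_jF_p W ε φ c p hφ hφ0' hε hc k1 a)]
    rcases eq_or_ne k1 k2 with hk | hk
    · rw [if_pos hk, if_pos hk]
      subst hk
      have hst := Matrix.ext_iff.mpr (h x k1) a b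
      simp only [Matrix.of_apply] at hst
      rw [e1 x k1 a b, e2 x k1 a b] at hst
      exact hst
    · rw [if_neg hk, if_neg hk]


end
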